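/- Let Φ(s₁₁,s₁₂,s₂₂) = 4·(s₂₂/(s₁₁s₂₂ − s₁₂² + s₂₂²))². With the trace pairing on symmetric 2×2 matrices, the map MLE(S) = −∇_S log Φ equals (2/(s₂₂(s₁₁s₂₂ − s₁₂² + s₂₂²))) · [[s₂₂², −s₁₂s₂₂],[−s₁₂s₂₂, s₁₂² + s₂₂²]], and it satisfies det(MLE(S)) = Φ(S), i.e., Φ solves the homaloidal PDE Φ = det(−∇ log Φ). -/

import Mathlib

/-- `Φ(s₁₁,s₁₂,s₂₂) = 4·(s₂₂/(s₁₁s₂₂ − s₁₂² + s₂₂²))²`. -/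
noncomputable def Phi4 (s11 s12 s22 : ℂ) : ℂ :=
  4 * (s22 / (s11 * s22 - s12 ^ 2 + s22 ^ 2)) ^ 2

lemma deriv1 (s11 s12 s22 : ℂ) (hD : s11 * s22 - s12 ^ 2 + s22 ^ 2 ≠ 0) :
    deriv (fun t => Phi4 t s12 s22) s11 =
      4 * (2 * (s22 / (s11 * s22 - s12 ^ 2 + s22 ^ 2)) ^ 1 *
        ((0 * (s11 * s22 - s12 ^ 2 + s22 ^ 2) - s22 * s22) /
          (s11 * s22 - s12 ^ 2 + s22 ^ 2) ^ 2)) := by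
  have hg : HasDerivAt (fun t : ℂ => t * s22 - s12 ^ 2 + s22 ^ 2) s22 s11 := by
    simpa using (((hasDerivAt_id s11).mul_const s22).sub_const (s12 ^ 2)).add_const (s22 ^ 2)
  have hq := (hasDerivAt_const s11 s22).div hg hD
  exact (((hq.pow 2).const_mul 4).deriv)

lemma deriv2 (s11 s12 s22 : ℂ) (hD : s11 * s22 - s12 ^ 2 + s22 ^ 2 ≠ 0) :
    deriv (fun t => Phi4 s11 t s22) s12 =
      4 * (2 * (s22 / (s11 * s22 - s12 ^ 2 + s22 ^ 2)) ^ 1 *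
        ((0 * (s11 * s22 - s12 ^ 2 + s22 ^ 2) - s22 * (0 - 2 * s12 ^ 1 + 0)) /
          (s11 * s22 - s12 ^ 2 + s22 ^ 2) ^ 2)) := by
  have hg : HasDerivAt (fun t : ℂ => s11 * s22 - t ^ 2 + s22 ^ 2)
      (0 - 2 * s12 ^ 1 + 0) s12 := by
    exact ((hasDerivAt_const s12 (s11 * s22)).sub ((hasDerivAt_id s12).pow 2)).add
      (hasDerivAt_const s12 (s22 ^ 2)) |>.congr_deriv (by simp only [id_eq]; ring)
  have hq := (hasDerivAt_const s12 s22).div hg hD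
  exact (((hq.pow 2).const_mul 4).deriv)

lemma deriv3 (s11 s12 s22 : ℂ) (hD : s11 * s22 - s12 ^ 2 + s22 ^ 2 ≠ 0) :
    deriv (fun t => Phi4 s11 s12 t) s22 =
      4 * (2 * (s22 / (s11 * s22 - s12 ^ 2 + s22 ^ 2)) ^ 1 *
        ((1 * (s11 * s22 - s12 ^ 2 + s22 ^ 2) - s22 * (s11 + 0 + 2 * s22 ^ 1)) /
          (s11 * s22 - s12 ^ 2 + s22 ^ 2) ^ 2)) := by
  have hg : HasDerivAt (fun t : ℂ => s11 * t - s12 ^ 2 + t ^ 2)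
      (s11 + 0 + 2 * s22 ^ 1) s22 := by
    exact (((hasDerivAt_id s22).const_mul s11).sub_const (s12 ^ 2)).add
      ((hasDerivAt_id s22).pow 2) |>.congr_deriv (by simp only [id_eq]; ring)
  have hq := (hasDerivAt_id s22).div hg hD
  exact (((hq.pow 2).const_mul 4).deriv)

/-- With the trace pairing on 2×2 symmetric matrices, the map `MLE(S) = −∇_S log Φ`
(gradient convention `(∇f)ᵢⱼ = (1/(2−δᵢⱼ)) ∂f/∂sᵢⱼ`) equals
`(2/(s₂₂(s₁₁s₂₂ − s₁₂² + s₂₂²))) · [[s₂₂², −s₁₂s₂₂],[−s₁₂s₂₂, s₁₂² + s₂₂²]]`,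
and `det(MLE(S)) = Φ(S)`, i.e. `Φ` solves the homaloidal PDE `Φ = det(−∇ log Φ)`. -/
theorem mle_formula_and_homaloidal (s11 s12 s22 : ℂ)
    (hD : s11 * s22 - s12 ^ 2 + s22 ^ 2 ≠ 0) (h22 : s22 ≠ 0) :
    let Φ := Phi4 s11 s12 s22
    let K11 := -(deriv (fun t => Phi4 t s12 s22) s11) / Φ
    let K12 := -((1 / 2 : ℂ) * deriv (fun t => Phi4 s11 t s22) s12) / Φ
    let K22 := -(deriv (fun t => Phi4 s11 s12 t) s22) / Φ
    (!![K11, K12; K12, K22] =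
      (2 / (s22 * (s11 * s22 - s12 ^ 2 + s22 ^ 2))) •
        !![s22 ^ 2, -(s12 * s22); -(s12 * s22), s12 ^ 2 + s22 ^ 2]) ∧
    (!![K11, K12; K12, K22]).det = Φ := by
  intro Φ K11 K12 K22
  set D := s11 * s22 - s12 ^ 2 + s22 ^ 2 with hDdef
  have hΦ : Φ = 4 * s22 ^ 2 / D ^ 2 := by
    show Phi4 s11 s12 s22 = _
    rw [Phi4, div_pow]; ring
  have hΦne : Φ ≠ 0 := by
    rw [hΦ]; exact div_ne_zero (mul_ne_zero (by norm_num) (pow_ne_zero 2 h22)) (pow_ne_zero 2 hD)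
  have e1 : deriv (fun t => Phi4 t s12 s22) s11 = -(8 * s22 ^ 3) / D ^ 3 := by
    rw [deriv1 s11 s12 s22 hD]
    rw [← hDdef]
    field_simp
    ring
  have e2 : deriv (fun t => Phi4 s11 t s22) s12 = 16 * s12 * s22 ^ 2 / D ^ 3 := by
    rw [deriv2 s11 s12 s22 hD]
    rw [← hDdef]
    field_simp
    ring
  have e3 : deriv (fun t => Phi4 s11 s12 t) s22 =
      -(8 * s22 * (s12 ^ 2 + s22 ^ 2)) / D ^ 3 := by
    rw [deriv3 s11 s12 s22 hD]
    rw [← hDdef]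
    field_simp
    ring
  have hK11 : K11 = 2 * s22 / (s11 * s22 - s12 ^ 2 + s22 ^ 2) := by
    show -(deriv (fun t => Phi4 t s12 s22) s11) / Φ = _
    rw [e1, hΦ]
    rw [← hDdef]
    field_simp
    ring
  have hK12 : K12 = -(2 * s12) / (s11 * s22 - s12 ^ 2 + s22 ^ 2) := by
    show -((1 / 2 : ℂ) * deriv (fun t => Phi4 s11 t s22) s12) / Φ = _
    rw [e2, hΦ]
    rw [← hDdef]
    field_simp
    ring
  have hK22 : K22 = 2 * (s12 ^ 2 + s22 ^ 2) /
      (s22 * (s11 * s22 - s12 ^ 2 + s22 ^ 2)) := by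
    show -(deriv (fun t => Phi4 s11 s12 t) s22) / Φ = _
    rw [e3, hΦ]
    rw [← hDdef]
    field_simp
    ring
  constructor
  · ext i j
    fin_cases i <;> fin_cases j <;>
      simp [hK11, hK12, hK22, Matrix.smul_apply, ← hDdef] <;> field_simp <;> ring
  · rw [Matrix.det_fin_two_of, hK11, hK12, hK22]
    rw [← hDdef]
    rw [hΦ]
    field_simp
    ring
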